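/- Let z ∈ ℂ with |z| ≤ C₀ and Im z ≥ h^{δ/2} with 0 < h ≤ 1, 0 ≤ δ < 1/2, let q ∈ [q₋, q₊] with 0 < q₋ ≤ q₊, and s ≥ 0. Define σ₁ = √(z−s), σ₂ = √(((q+1)/q)z − s) (positive imaginary part branch). Then there exists C > 0 depending only on C₀, q₋, q₊ such that: (i) for s ≥ 2(1+1/q₋)C₀, |det a| = |σ₂−σ₁|²/|t₀'(σ₁)t₀'(σ₂)| satisfies |det a| ≥ (1/C)(1+s)^{−2}; (ii) for s ≤ 2(1+1/q₋)C₀, |det a| ≥ 1/C. Here t₀'(σ₁) = −2σ₁z, t₀'(σ₂) = 2σ₂z. -/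

import Mathlib

open Complex

/-- Ellipticity of the boundary symbol: for `|z| ≤ C₀`, `Im z ≥ h^{δ/2}`,
`q ∈ [qmin, qmax]`, `s ≥ 0` and roots `σ₁ = √(z−s)`, `σ₂ = √(((q+1)/q)z−s)` with
positive imaginary parts, there is `C > 0` depending only on `C₀, qmin, qmax` such
that `|det a| = |σ₂−σ₁|²/|t₀'(σ₁)t₀'(σ₂)|` (with `t₀'(σ₁) = −2σ₁z`,
`t₀'(σ₂) = 2σ₂z`) satisfies `|det a| ≥ (1/C)(1+s)⁻²` for `s ≥ 2(1+1/qmin)C₀` and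
`|det a| ≥ 1/C` for `s ≤ 2(1+1/qmin)C₀`. -/
theorem boundary_symbol_ellipticity (C₀ qmin qmax : ℝ) (hC₀ : 0 < C₀) (hqmin : 0 < qmin)
    (hq : qmin ≤ qmax) :
    ∃ C : ℝ, 0 < C ∧
      ∀ (δ h : ℝ) (z : ℂ) (q s : ℝ) (σ₁ σ₂ : ℂ),
        0 ≤ δ → δ < 1 / 2 → 0 < h → h ≤ 1 →
        ‖z‖ ≤ C₀ → h ^ (δ / 2) ≤ z.im →
        qmin ≤ q → q ≤ qmax → 0 ≤ s →
        σ₁ ^ 2 = z - (s : ℂ) → σ₂ ^ 2 = ((q + 1) / q : ℝ) * z - (s : ℂ) →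
        0 < σ₁.im → 0 < σ₂.im →
        (2 * (1 + 1 / qmin) * C₀ ≤ s →
          1 / C * ((1 + s) ^ 2)⁻¹
            ≤ ‖σ₂ - σ₁‖ ^ 2 / ‖(-2 * σ₁ * z) * (2 * σ₂ * z)‖)
        ∧ (s ≤ 2 * (1 + 1 / qmin) * C₀ →
          1 / C ≤ ‖σ₂ - σ₁‖ ^ 2 / ‖(-2 * σ₁ * z) * (2 * σ₂ * z)‖) := by
  have hqmax : 0 < qmax := lt_of_lt_of_le hqmin hq
  set K : ℝ := (1 + 1 / qmin) * C₀ with hKdef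
  have hK : 0 < K := by positivity
  set M : ℝ := max K 1 with hMdef
  have hM1 : (1 : ℝ) ≤ M := le_max_right _ _
  have hKM : K ≤ M := le_max_left _ _
  have hM0 : 0 < M := lt_of_lt_of_le one_pos hM1
  refine ⟨16 * qmax ^ 2 * M ^ 2 * (1 + 2 * K) ^ 2, by positivity, ?_⟩
  intro δ h z q s σ₁ σ₂ hδ hδ2 hh hh1 hzC hzim hq1 hq2 hs h1 h2 him1 him2
  have hq0 : 0 < q := lt_of_lt_of_le hqmin hq1
  have hzim0 : 0 < z.im := lt_of_lt_of_le (Real.rpow_pos_of_pos hh _) hzim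
  have hz0 : z ≠ 0 := by
    intro hzz; rw [hzz] at hzim0; simp at hzim0
  have hσ1 : σ₁ ≠ 0 := by
    intro hzz; rw [hzz] at him1; simp at him1
  have hσ2 : σ₂ ≠ 0 := by
    intro hzz; rw [hzz] at him2; simp at him2
  have hsum : σ₁ + σ₂ ≠ 0 := by
    intro hzz
    have : (σ₁ + σ₂).im = 0 := by rw [hzz]; simp
    rw [Complex.add_im] at this; linarith
  have hqc : (q : ℂ) ≠ 0 := by exact_mod_cast hq0.ne'
  -- key algebraic identity
  have hkey : (σ₂ - σ₁) * (σ₁ + σ₂) = (q : ℂ)⁻¹ * z := by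
    have e : (σ₂ - σ₁) * (σ₁ + σ₂) = σ₂ ^ 2 - σ₁ ^ 2 := by ring
    rw [e, h1, h2]
    push_cast
    field_simp
    ring
  set A1 : ℝ := ‖σ₁‖ with hA1
  set A2 : ℝ := ‖σ₂‖ with hA2
  set AS : ℝ := ‖σ₁ + σ₂‖ with hAS
  set AD : ℝ := ‖σ₂ - σ₁‖ with hAD
  set Az : ℝ := ‖z‖ with hAz
  have hA1p : 0 < A1 := norm_pos_iff.mpr hσ1
  have hA2p : 0 < A2 := norm_pos_iff.mpr hσ2
  have hASp : 0 < AS := norm_pos_iff.mpr hsum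
  have hAzp : 0 < Az := norm_pos_iff.mpr hz0
  have habs : AD * AS = q⁻¹ * Az := by
    have := congrArg (‖·‖) hkey
    simpa [norm_mul, norm_inv, Complex.norm_real, Real.norm_eq_abs, abs_of_pos hq0] using this
  -- denominator
  have hden : ‖(-2 * σ₁ * z) * (2 * σ₂ * z)‖ = 4 * A1 * A2 * Az ^ 2 := by
    simp only [norm_mul]
    rw [show ‖(-2 : ℂ)‖ = 2 by simp, show ‖(2 : ℂ)‖ = 2 by simp]
    ring
  -- exact value of det a
  have hdet : AD ^ 2 / (4 * A1 * A2 * Az ^ 2)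
      = 1 / (4 * q ^ 2 * AS ^ 2 * A1 * A2) := by
    have hADv : AD = Az / (q * AS) := by
      field_simp at habs ⊢
      linarith [habs]
    rw [hADv]
    field_simp
  -- bounds on A1, A2, AS
  set r : ℝ := Real.sqrt (K + s) with hr
  have hKs : 0 < K + s := by linarith
  have hrp : 0 < r := Real.sqrt_pos.mpr hKs
  have hr2 : r ^ 2 = K + s := Real.sq_sqrt hKs.le
  have hC0K : C₀ ≤ K := by
    have h01 : (1 : ℝ) ≤ 1 + 1 / qmin := by
      have : 0 < 1 / qmin := by positivity
      linarith
    exact le_mul_of_one_le_left hC₀.le h01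
  have hA1le : A1 ≤ r := by
    rw [hr]
    apply Real.le_sqrt' hA1p |>.mpr
    have e1 : A1 ^ 2 = ‖z - (s : ℂ)‖ := by
      rw [hA1, ← norm_pow, h1]
    rw [e1]
    calc ‖z - (s : ℂ)‖ ≤ ‖z‖ + ‖(s : ℂ)‖ :=
          norm_sub_le _ _
      _ ≤ C₀ + s := by
          rw [Complex.norm_real, Real.norm_eq_abs, _root_.abs_of_nonneg hs]; linarith
      _ ≤ K + s := by linarith
  have hA2le : A2 ≤ r := by
    rw [hr]
    apply Real.le_sqrt' hA2p |>.mpr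
    have e2 : A2 ^ 2 = ‖((q + 1) / q : ℝ) * z - (s : ℂ)‖ := by
      rw [hA2, ← norm_pow, h2]
    rw [e2]
    have hcoef : (q + 1) / q ≤ 1 + 1 / qmin := by
      rw [add_div, div_self hq0.ne']
      have : 1 / q ≤ 1 / qmin := one_div_le_one_div_of_le hqmin hq1
      linarith
    calc ‖((q + 1) / q : ℝ) * z - (s : ℂ)‖
        ≤ ‖((q + 1) / q : ℝ) * z‖ + ‖(s : ℂ)‖ :=
          norm_sub_le _ _
      _ = (q + 1) / q * Az + s := by
          rw [norm_mul, Complex.norm_real, Complex.norm_real, Real.norm_eq_abs, Real.norm_eq_abs,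
            _root_.abs_of_nonneg hs, _root_.abs_of_pos (by positivity : (0:ℝ) < (q+1)/q)]
      _ ≤ (1 + 1 / qmin) * C₀ + s := by
          have h0 : (q + 1) / q * Az ≤ (1 + 1 / qmin) * C₀ :=
            mul_le_mul hcoef hzC hAzp.le (by positivity)
          linarith
      _ = K + s := rfl
  have hASle : AS ≤ 2 * r := by
    calc AS ≤ A1 + A2 := norm_add_le _ _
      _ ≤ 2 * r := by linarith
  -- main lower bound for denominator expression
  have hprod : 4 * q ^ 2 * AS ^ 2 * A1 * A2 ≤ 16 * qmax ^ 2 * (K + s) ^ 2 := by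
    have h1' : q ^ 2 ≤ qmax ^ 2 := pow_le_pow_left₀ hq0.le hq2 2
    have h2' : AS ^ 2 ≤ 4 * r ^ 2 := by
      calc AS ^ 2 ≤ (2 * r) ^ 2 := pow_le_pow_left₀ hASp.le hASle 2
        _ = 4 * r ^ 2 := by ring
    have h3' : A1 * A2 ≤ r ^ 2 := by
      calc A1 * A2 ≤ r * r := mul_le_mul hA1le hA2le hA2p.le hrp.le
        _ = r ^ 2 := (sq r).symm
    calc 4 * q ^ 2 * AS ^ 2 * A1 * A2 = 4 * (q ^ 2 * (AS ^ 2 * (A1 * A2))) := by ring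
      _ ≤ 4 * (qmax ^ 2 * ((4 * r ^ 2) * (r ^ 2))) := by
          gcongr
      _ = 16 * qmax ^ 2 * (r ^ 2) ^ 2 := by ring
      _ = 16 * qmax ^ 2 * (K + s) ^ 2 := by rw [hr2]
  have hDlow : 1 / (16 * qmax ^ 2 * (K + s) ^ 2) ≤ AD ^ 2 / (4 * A1 * A2 * Az ^ 2) := by
    rw [hdet]
    apply one_div_le_one_div_of_le
    · positivity
    · exact hprod
  have hKs1 : K + s ≤ M * (1 + s) := by
    have hsM : s ≤ M * s := le_mul_of_one_le_left hs hM1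
    have e : M * (1 + s) = M + M * s := by ring
    linarith
  have hstep1 : (K + s) ^ 2 ≤ M ^ 2 * (1 + s) ^ 2 := by
    calc (K + s) ^ 2 ≤ (M * (1 + s)) ^ 2 := pow_le_pow_left₀ hKs.le hKs1 2
      _ = M ^ 2 * (1 + s) ^ 2 := by ring
  have hbig : 16 * qmax ^ 2 * (K + s) ^ 2 ≤ 16 * qmax ^ 2 * (M ^ 2 * (1 + s) ^ 2) :=
    mul_le_mul_of_nonneg_left hstep1 (by positivity)
  rw [hden]
  constructor
  · intro _
    have h12 : (1 : ℝ) ≤ 1 + 2 * K := by linarith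
    have h1K : (1 : ℝ) ≤ (1 + 2 * K) ^ 2 := by
      calc (1 : ℝ) = 1 ^ 2 := by norm_num
        _ ≤ (1 + 2 * K) ^ 2 := pow_le_pow_left₀ one_pos.le h12 2
    have hle : 16 * qmax ^ 2 * (K + s) ^ 2
        ≤ 16 * qmax ^ 2 * M ^ 2 * (1 + 2 * K) ^ 2 * (1 + s) ^ 2 := by
      calc 16 * qmax ^ 2 * (K + s) ^ 2 ≤ 16 * qmax ^ 2 * (M ^ 2 * (1 + s) ^ 2) := hbig
        _ = 16 * qmax ^ 2 * M ^ 2 * (1 + s) ^ 2 * 1 := by ring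
        _ ≤ 16 * qmax ^ 2 * M ^ 2 * (1 + s) ^ 2 * (1 + 2 * K) ^ 2 :=
            mul_le_mul_of_nonneg_left h1K (by positivity)
        _ = 16 * qmax ^ 2 * M ^ 2 * (1 + 2 * K) ^ 2 * (1 + s) ^ 2 := by ring
    calc 1 / (16 * qmax ^ 2 * M ^ 2 * (1 + 2 * K) ^ 2) * ((1 + s) ^ 2)⁻¹
        = 1 / (16 * qmax ^ 2 * M ^ 2 * (1 + 2 * K) ^ 2 * (1 + s) ^ 2) := by
          rw [one_div, one_div, ← mul_inv]
      _ ≤ 1 / (16 * qmax ^ 2 * (K + s) ^ 2) :=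
          one_div_le_one_div_of_le (by positivity) hle
      _ ≤ AD ^ 2 / (4 * A1 * A2 * Az ^ 2) := hDlow
  · intro hsle
    have hs2K : s ≤ 2 * K := by
      rw [hKdef]; linarith [hsle]
    have hsq : (1 + s) ^ 2 ≤ (1 + 2 * K) ^ 2 :=
      pow_le_pow_left₀ (by linarith) (by linarith) 2
    have hle2 : 16 * qmax ^ 2 * (K + s) ^ 2
        ≤ 16 * qmax ^ 2 * M ^ 2 * (1 + 2 * K) ^ 2 := by
      calc 16 * qmax ^ 2 * (K + s) ^ 2 ≤ 16 * qmax ^ 2 * (M ^ 2 * (1 + s) ^ 2) := hbig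
        _ ≤ 16 * qmax ^ 2 * (M ^ 2 * (1 + 2 * K) ^ 2) :=
            mul_le_mul_of_nonneg_left
              (mul_le_mul_of_nonneg_left hsq (sq_nonneg M)) (by positivity)
        _ = 16 * qmax ^ 2 * M ^ 2 * (1 + 2 * K) ^ 2 := by ring
    calc 1 / (16 * qmax ^ 2 * M ^ 2 * (1 + 2 * K) ^ 2)
        ≤ 1 / (16 * qmax ^ 2 * (K + s) ^ 2) :=
          one_div_le_one_div_of_le (by positivity) hle2
      _ ≤ AD ^ 2 / (4 * A1 * A2 * Az ^ 2) := hDlow
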